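/- Let G be a group generated by a finite subset X, and let N ⊆ G be a subset such that (i) N is exponentially negligible in G with respect to X, and (ii) there exist constants ρ > 1 and n₀ ≥ 0 such that |C_G(g) ∩ B_{G,X}(n)| ≤ ρ^{-n}·|B_{G,X}(n)| for all g ∈ G ∖ N and all n ≥ n₀. Then the set {(x,y) ∈ G² : xy = yx} is exponentially negligible in G with respect to X. -/

import Mathlib

open scoped Classical

noncomputable section

namespace RelHypPaper


variable {G : Type*} [Group G]

/-- The word length of `g ∈ G` with respect to a generating set `S ⊆ G`:
the least length of a word over `S ∪ S⁻¹` representing `g`. -/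
def wordLength (S : Set G) (g : G) : ℕ :=
  sInf {n | ∃ l : List G, l.length = n ∧ (∀ x ∈ l, x ∈ S ∪ S⁻¹) ∧ l.prod = g}

/-- The ball of radius `n` in the Cayley graph `Γ(G,S)`. -/
def ball (S : Set G) (n : ℕ) : Set G := {g | wordLength S g ≤ n}

/-- The sphere of radius `n` in the Cayley graph `Γ(G,S)`. -/
def sphere (S : Set G) (n : ℕ) : Set G := {g | wordLength S g = n}

/-- A subset `S ⊆ G` is exponentially negligible with respect to `X` if
`|S ∩ B(n)| / |B(n)| ≤ ρ⁻ⁿ` for some `ρ > 1` and all sufficiently large `n`. -/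
def ExpNegligible (S : Set G) (X : Set G) : Prop :=
  ∃ ρ : ℝ, 1 < ρ ∧ ∀ᶠ n : ℕ in Filter.atTop,
    ((S ∩ ball X n).ncard : ℝ) / ((ball X n).ncard : ℝ) ≤ ρ ^ (-(n : ℤ))

/-- A subset `S ⊆ G²` is exponentially negligible with respect to `X` if
`|S ∩ B(n)²| / |B(n)|² ≤ ρ⁻ⁿ` for some `ρ > 1` and all sufficiently large `n`. -/
def ExpNegligible2 (S : Set (G × G)) (X : Set G) : Prop :=
  ∃ ρ : ℝ, 1 < ρ ∧ ∀ᶠ n : ℕ in Filter.atTop,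
    ((S ∩ (ball X n) ×ˢ (ball X n)).ncard : ℝ) / ((ball X n).ncard : ℝ) ^ 2
      ≤ ρ ^ (-(n : ℤ))

/-- A group is virtually cyclic if it has a cyclic subgroup of finite index. -/
def VirtuallyCyclic (G : Type*) [Group G] : Prop :=
  ∃ C : Subgroup G, IsCyclic C ∧ C.FiniteIndex

variable {Ω : Type*}

/-- The free product `F = (∗_{ω∈Ω} H_ω) ∗ F(X)`. -/
abbrev RelFree (H : Ω → Subgroup G) (X : Set G) : Type _ :=
  Monoid.Coprod (Monoid.CoprodI fun ω => H ω) (FreeGroup X)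

/-- The canonical homomorphism `φ : (∗_{ω∈Ω} H_ω) ∗ F(X) → G`. -/
def relMap (H : Ω → Subgroup G) (X : Set G) : RelFree H X →* G :=
  Monoid.Coprod.lift (Monoid.CoprodI.lift fun ω => (H ω).subtype)
    (FreeGroup.lift fun x => (x : G))

/-- The natural generating set of `F = (∗_{ω∈Ω} H_ω) ∗ F(X)`: the letters of `X`
together with the elements of the `H_ω`. -/
def relGens (H : Ω → Subgroup G) (X : Set G) : Set (RelFree H X) :=
  (Set.range fun x : X => Monoid.Coprod.inr (FreeGroup.of x)) ∪
    ⋃ ω, Set.range fun h : H ω => Monoid.Coprod.inl (Monoid.CoprodI.of h)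

/-- The relative area of `w ∈ F`: the least `n` such that `w` is a product of `n`
conjugates of elements of `R ∪ R⁻¹`. -/
def relArea {F : Type*} [Group F] (R : Set F) (w : F) : ℕ :=
  sInf {n | ∃ l : List F, l.length = n ∧
    (∀ x ∈ l, ∃ f r, r ∈ R ∪ R⁻¹ ∧ x = f⁻¹ * r * f) ∧ l.prod = w}

/-- Osin's definition: `G` is hyperbolic relative to the collection `{H_ω}_{ω∈Ω}`
if it is finitely presented relative to `{H_ω}` (witnessed by some finite `X ⊆ G`
and a finite set `R` of relators) and satisfies a relative linear isoperimetric
inequality. -/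
def IsRelativelyHyperbolic (H : Ω → Subgroup G) : Prop :=
  ∃ X : Set G, X.Finite ∧ Function.Surjective (relMap H X) ∧
    ∃ R : Set (RelFree H X), R.Finite ∧
      (relMap H X).ker = Subgroup.normalClosure R ∧
      ∃ C : ℝ, 0 ≤ C ∧ ∀ w ∈ (relMap H X).ker,
        (relArea R w : ℝ) ≤ C * (wordLength (relGens H X) w)

/-- The set of parabolic elements: elements conjugate into some `H_ω`. -/
def parabolics (H : Ω → Subgroup G) : Set G :=
  {x | ∃ ω, ∃ g : G, ∃ h ∈ H ω, x = g * h * g⁻¹}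

/-- The set `H = ⋃_{ω∈Ω} (H_ω ∖ {1})`. -/
def hSet (H : Ω → Subgroup G) : Set G := (⋃ ω, (H ω : Set G)) \ {1}


lemma one_mem_ball (S : Set G) (n : ℕ) : (1 : G) ∈ ball S n := by
  have h0 : (0 : ℕ) ∈ {m | ∃ l : List G, l.length = m ∧ (∀ x ∈ l, x ∈ S ∪ S⁻¹) ∧ l.prod = 1} :=
    ⟨[], rfl, by simp, rfl⟩
  exact le_trans (Nat.sInf_le h0) (Nat.zero_le n)

lemma exists_list_of_mem_ball {X : Set G} (hXgen : Subgroup.closure X = ⊤)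
    {n : ℕ} {g : G} (hg : g ∈ ball X n) :
    ∃ l : List G, l.length ≤ n ∧ (∀ x ∈ l, x ∈ X ∪ X⁻¹) ∧ l.prod = g := by
  have hgm : g ∈ Submonoid.closure (X ∪ X⁻¹) := by
    have : g ∈ (Subgroup.closure X).toSubmonoid := by rw [hXgen]; trivial
    rwa [Subgroup.closure_toSubmonoid] at this
  obtain ⟨l, hl1, hl2⟩ := Submonoid.exists_list_of_mem_closure hgm
  have hne : {m | ∃ l : List G, l.length = m ∧ (∀ x ∈ l, x ∈ X ∪ X⁻¹) ∧ l.prod = g}.Nonempty :=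
    ⟨l.length, l, rfl, hl1, hl2⟩
  obtain ⟨l', hl', hl'2, hl'3⟩ := Nat.sInf_mem hne
  exact ⟨l', hl' ▸ hg, hl'2, hl'3⟩

lemma ball_finite {X : Set G} (hXfin : X.Finite) (hXgen : Subgroup.closure X = ⊤) (n : ℕ) :
    (ball X n).Finite := by
  classical
  have hY : (X ∪ X⁻¹).Finite := hXfin.union hXfin.inv
  haveI : Finite ↥(X ∪ X⁻¹) := hY.to_subtype
  have h1 : {l : List ↥(X ∪ X⁻¹) | l.length ≤ n}.Finite := List.finite_length_le _ n
  refine (h1.image (fun l : List ↥(X ∪ X⁻¹) => (l.map (Subtype.val)).prod)).subset ?_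
  intro g hg
  obtain ⟨l, hlen, hmem, hprod⟩ := exists_list_of_mem_ball hXgen hg
  refine ⟨l.pmap (fun x hx => (⟨x, hx⟩ : ↥(X ∪ X⁻¹))) hmem, by simpa using hlen, ?_⟩
  simp only [List.map_pmap]
  rw [List.pmap_eq_map]
  simpa using hprod

lemma count_bound {X : Set G} (hXfin : X.Finite) (hXgen : Subgroup.closure X = ⊤)
    (N : Set G) {n : ℕ} {r : ℝ} (hr0 : 0 ≤ r)
    (hr : ∀ g : G, g ∉ N → (((Subgroup.centralizer {g} : Set G) ∩ ball X n).ncard : ℝ) ≤ r) :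
    (({p : G × G | p.1 * p.2 = p.2 * p.1} ∩ (ball X n) ×ˢ (ball X n)).ncard : ℝ) ≤
      ((N ∩ ball X n).ncard : ℝ) * ((ball X n).ncard : ℝ) + ((ball X n).ncard : ℝ) * r := by
  classical
  have hB : (ball X n).Finite := ball_finite hXfin hXgen n
  set Bf : Finset G := hB.toFinset with hBfdef
  have hBcard : (ball X n).ncard = Bf.card := Set.ncard_eq_toFinset_card _ hB
  set S : Finset (G × G) := (Bf ×ˢ Bf).filter (fun p => p.1 * p.2 = p.2 * p.1) with hSdef
  have hset : {p : G × G | p.1 * p.2 = p.2 * p.1} ∩ (ball X n) ×ˢ (ball X n) = ↑S := by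
    ext p
    simp only [hSdef, Finset.coe_filter, Finset.mem_product, Set.mem_inter_iff,
      Set.mem_setOf_eq, Set.mem_prod, hBfdef, Set.Finite.mem_toFinset]
    tauto
  rw [hset, Set.ncard_coe_finset]
  have hsplit : (S.filter (fun p => p.1 ∈ N)).card + (S.filter (fun p => p.1 ∉ N)).card
      = S.card := Finset.card_filter_add_card_filter_not _
  have hNB : (N ∩ ball X n).Finite := hB.inter_of_right N
  have h1 : (S.filter (fun p => p.1 ∈ N)).card ≤ hNB.toFinset.card * Bf.card := by
    rw [← Finset.card_product]
    apply Finset.card_le_card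
    intro p hp
    simp only [Finset.mem_filter, hSdef, Finset.mem_product] at hp ⊢
    obtain ⟨⟨⟨hp1, hp2⟩, _⟩, hpN⟩ := hp
    refine ⟨?_, hp2⟩
    rw [Set.Finite.mem_toFinset]
    exact ⟨hpN, by simpa [hBfdef, Set.Finite.mem_toFinset] using hp1⟩
  have h2 : ((S.filter (fun p => p.1 ∉ N)).card : ℝ) ≤ (Bf.card : ℝ) * r := by
    have hfib : (S.filter (fun p => p.1 ∉ N)).card
        = ∑ x ∈ Bf, ((S.filter (fun p => p.1 ∉ N)).filter (fun p => p.1 = x)).card := by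
      apply Finset.card_eq_sum_card_fiberwise
      intro p hp
      simp only [Finset.mem_coe, Finset.mem_filter, hSdef, Finset.mem_product] at hp
      exact hp.1.1.1
    rw [hfib]
    push_cast
    have hbound : ∀ x ∈ Bf,
        ((((S.filter (fun p => p.1 ∉ N)).filter (fun p => p.1 = x)).card : ℝ)) ≤ r := by
      intro x hx
      by_cases hxN : x ∈ N
      · have : ((S.filter (fun p => p.1 ∉ N)).filter (fun p => p.1 = x)) = ∅ := by
          rw [Finset.eq_empty_iff_forall_notMem]
          intro p hp
          simp only [Finset.mem_filter] at hp
          exact hp.1.2 (hp.2 ▸ hxN)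
        simp [this, hr0]
      · have hCB : ((Subgroup.centralizer {x} : Set G) ∩ ball X n).Finite :=
          hB.inter_of_right _
        refine le_trans ?_ (hr x hxN)
        rw [Set.ncard_eq_toFinset_card _ hCB]
        have hcard : ((S.filter (fun p => p.1 ∉ N)).filter (fun p => p.1 = x)).card
            ≤ hCB.toFinset.card := by
          apply Finset.card_le_card_of_injOn (fun p => p.2)
          · intro p hp
            simp only [Finset.mem_coe, Finset.mem_filter, hSdef, Finset.mem_product] at hp
            obtain ⟨⟨⟨⟨hp1, hp2⟩, hcomm⟩, hpN⟩, hpx⟩ := hp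
            rw [Finset.mem_coe, Set.Finite.mem_toFinset]
            refine ⟨?_, by simpa [hBfdef, Set.Finite.mem_toFinset] using hp2⟩
            rw [SetLike.mem_coe, Subgroup.mem_centralizer_iff]
            intro h hh
            rw [Set.mem_singleton_iff] at hh
            subst hh
            rw [hpx] at hcomm
            exact hcomm
          · intro p hp q hq hpq
            simp only [Finset.coe_filter, Set.mem_setOf_eq] at hp hq
            exact Prod.ext (hp.2.trans hq.2.symm) hpq
        exact_mod_cast hcard
    calc (∑ x ∈ Bf, (((S.filter (fun p => p.1 ∉ N)).filter (fun p => p.1 = x)).card : ℝ))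
        ≤ Bf.card • r := Finset.sum_le_card_nsmul _ _ _ hbound
      _ = (Bf.card : ℝ) * r := by rw [nsmul_eq_mul]
  have hScard : (S.card : ℝ) ≤ (hNB.toFinset.card : ℝ) * Bf.card + (Bf.card : ℝ) * r := by
    rw [← hsplit]
    push_cast
    have h1' : ((S.filter (fun p => p.1 ∈ N)).card : ℝ) ≤ (hNB.toFinset.card : ℝ) * Bf.card := by
      exact_mod_cast h1
    linarith
  rw [hBcard, Set.ncard_eq_toFinset_card _ hNB]
  exact hScard

/-- (Lemma `l:amv`.) Let `G` be generated by a finite set `X` and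
let `N ⊆ G` be (i) exponentially negligible, and such that (ii) there are `ρ > 1`
and `n₀` with `|C_G(g) ∩ B(n)| ≤ ρ⁻ⁿ·|B(n)|` for all `g ∉ N` and `n ≥ n₀`. Then the
set of commuting pairs is exponentially negligible in `G` with respect to `X`. -/
theorem commuting_pairs_expNegligible_of_centralizer_bound {G : Type*} [Group G]
    (X : Set G) (hXfin : X.Finite) (hXgen : Subgroup.closure X = ⊤)
    (N : Set G)
    (hneg : ExpNegligible N X)
    (hcent : ∃ ρ : ℝ, 1 < ρ ∧ ∃ n₀ : ℕ, ∀ g : G, g ∉ N → ∀ n : ℕ, n₀ ≤ n →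
      (((Subgroup.centralizer {g} : Set G) ∩ ball X n).ncard : ℝ) ≤
        ρ ^ (-(n : ℤ)) * ((ball X n).ncard : ℝ)) :
    ExpNegligible2 {p : G × G | p.1 * p.2 = p.2 * p.1} X := by
  classical
  obtain ⟨ρ₁, hρ₁, hev₁⟩ := hneg
  obtain ⟨ρ₂, hρ₂, n₀, hc⟩ := hcent
  set ρ : ℝ := min ρ₁ ρ₂ with hρdef
  have hρ : 1 < ρ := lt_min hρ₁ hρ₂
  have hρ0 : 0 < ρ := lt_trans one_pos hρ
  have hsq : 1 < Real.sqrt ρ := by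
    rw [show (1:ℝ) = Real.sqrt 1 by simp]
    exact Real.sqrt_lt_sqrt (by norm_num) hρ
  refine ⟨Real.sqrt ρ, hsq, ?_⟩
  have h2 : ∀ᶠ n : ℕ in Filter.atTop, (2:ℝ) ≤ (Real.sqrt ρ) ^ n :=
    (tendsto_pow_atTop_atTop_of_one_lt hsq).eventually_ge_atTop 2
  filter_upwards [hev₁, h2, Filter.eventually_ge_atTop n₀] with n hn1 hn2 hn0
  have hB : (ball X n).Finite := ball_finite hXfin hXgen n
  have hb0 : (0:ℝ) < ((ball X n).ncard : ℝ) := by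
    exact_mod_cast (Set.ncard_pos hB).mpr ⟨1, one_mem_ball X n⟩
  set b : ℝ := ((ball X n).ncard : ℝ) with hbdef
  have hr0 : (0:ℝ) ≤ ρ₂ ^ (-(n:ℤ)) * b :=
    le_of_lt (mul_pos (zpow_pos (lt_trans one_pos hρ₂) _) hb0)
  have hcount := count_bound hXfin hXgen N hr0 (fun g hg => hc g hg n hn0)
  rw [div_le_iff₀ (by positivity : (0:ℝ) < b ^ 2)]
  have hNb : ((N ∩ ball X n).ncard : ℝ) ≤ ρ₁ ^ (-(n:ℤ)) * b := by
    rcases eq_or_lt_of_le (le_of_lt hb0) with h | h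
    · exact absurd h.symm (ne_of_gt hb0)
    · have := (div_le_iff₀ hb0).mp hn1
      exact this
  have hmono : ∀ c : ℝ, 1 < c → ρ ≤ c → c ^ (-(n:ℤ)) ≤ ρ ^ (-(n:ℤ)) := by
    intro c hc hcρ
    rw [zpow_neg, zpow_neg, zpow_natCast, zpow_natCast]
    exact inv_anti₀ (pow_pos hρ0 n) (pow_le_pow_left₀ (le_of_lt hρ0) hcρ n)
  have key : 2 * ρ ^ (-(n:ℤ)) ≤ (Real.sqrt ρ) ^ (-(n:ℤ)) := by
    set a : ℝ := (Real.sqrt ρ) ^ n with hadef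
    have ha0 : 0 < a := pow_pos (lt_trans one_pos hsq) n
    have hρn : ρ ^ n = a ^ 2 := by
      rw [hadef, ← pow_mul, mul_comm, pow_mul, Real.sq_sqrt (le_of_lt hρ0)]
    rw [zpow_neg, zpow_neg, zpow_natCast, zpow_natCast, hρn]
    have hinv : a⁻¹ ≤ 2⁻¹ := inv_anti₀ (by norm_num) hn2
    calc 2 * (a ^ 2)⁻¹ = 2 * (a⁻¹ * a⁻¹) := by rw [pow_two, mul_inv]
      _ ≤ 2 * (2⁻¹ * a⁻¹) := by
          apply mul_le_mul_of_nonneg_left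
          · exact mul_le_mul_of_nonneg_right hinv (le_of_lt (inv_pos.mpr ha0))
          · norm_num
      _ = a⁻¹ := by rw [← mul_assoc]; norm_num
  calc (({p : G × G | p.1 * p.2 = p.2 * p.1} ∩ (ball X n) ×ˢ (ball X n)).ncard : ℝ)
      ≤ ((N ∩ ball X n).ncard : ℝ) * b + b * (ρ₂ ^ (-(n:ℤ)) * b) := hcount
    _ ≤ (ρ₁ ^ (-(n:ℤ)) * b) * b + b * (ρ₂ ^ (-(n:ℤ)) * b) := by
        apply add_le_add_left
        exact mul_le_mul_of_nonneg_right hNb (le_of_lt hb0)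
    _ = ρ₁ ^ (-(n:ℤ)) * b ^ 2 + ρ₂ ^ (-(n:ℤ)) * b ^ 2 := by ring
    _ ≤ ρ ^ (-(n:ℤ)) * b ^ 2 + ρ ^ (-(n:ℤ)) * b ^ 2 := by
        apply add_le_add <;>
          exact mul_le_mul_of_nonneg_right
            (hmono _ (by first | exact hρ₁ | exact hρ₂) (by simp [hρdef])) (by positivity)
    _ = 2 * ρ ^ (-(n:ℤ)) * b ^ 2 := by ring
    _ ≤ (Real.sqrt ρ) ^ (-(n:ℤ)) * b ^ 2 := mul_le_mul_of_nonneg_right key (by positivity)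

end RelHypPaper
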